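/- arXiv:2302.06351 — 4 statements merged into one kernel-verified Lean document; each statement's English description precedes it below -/
import Mathlib

section
/- Every finite colored graph (V,E,π) admits a coarsest equitable refinement: there exists an equitable coloring π' refining π such that every equitable coloring refining π also refines into π' (i.e., the partition of π' is coarser than or equal to that of any equitable refinement of π). -/
namespace Sassy

/-- A coloring is equitable if vertices of the same color have the same number of
neighbors in every color class. -/
def Equitable {V C : Type*} (G : SimpleGraph V) (π : V → C) : Prop :=
  ∀ v w, π v = π w → ∀ c : C,
    {u | G.Adj v u ∧ π u = c}.ncard = {u | G.Adj w u ∧ π u = c}.ncard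

/-- `φ` is a color-preserving automorphism of the colored graph `(G, π)`. -/
def IsAut {V C : Type*} (G : SimpleGraph V) (π : V → C) (φ : Equiv.Perm V) : Prop :=
  (∀ v w, G.Adj (φ v) (φ w) ↔ G.Adj v w) ∧ ∀ v, π (φ v) = π v

/-- The automorphism group of a colored graph, as a subgroup of `Equiv.Perm V`. -/
def Aut {V C : Type*} (G : SimpleGraph V) (π : V → C) : Subgroup (Equiv.Perm V) where
  carrier := {φ | IsAut G π φ}
  one_mem' := ⟨fun _ _ => Iff.rfl, fun _ => rfl⟩
  mul_mem' := by
    rintro a b ⟨ha1, ha2⟩ ⟨hb1, hb2⟩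
    refine ⟨fun v w => ?_, fun v => ?_⟩
    · simpa [Equiv.Perm.mul_apply] using (ha1 (b v) (b w)).trans (hb1 v w)
    · simp [Equiv.Perm.mul_apply, ha2, hb2]
  inv_mem' := by
    rintro a ⟨ha1, ha2⟩
    refine ⟨fun v w => ?_, fun v => ?_⟩
    · conv_rhs => rw [← Equiv.apply_symm_apply a v, ← Equiv.apply_symm_apply a w]
      exact (ha1 _ _).symm
    · conv_rhs => rw [← Equiv.apply_symm_apply a v]
      exact (ha2 _).symm

end Sassy

open scoped Classical


open Finset in
private lemma ncard_eq_sum {V : Type*} [Fintype V] (P : V → Prop) :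
    {u | P u}.ncard = ∑ u, if P u then 1 else 0 := by
  classical
  rw [Set.ncard_eq_toFinset_card', Set.toFinset_setOf, Finset.card_filter]

open Finset in
/-- key partial sum computation -/
private lemma sum_class {V D : Type*} [Fintype V] (G : SimpleGraph V) (σ : V → D)
    (f : V → ℕ) (hf : ∀ v w, σ v = σ w → f v = f w) (v r : V) :
    ∑ u ∈ univ.filter (fun u => σ u = σ r), (if G.Adj v u then f u else 0)
      = {u | G.Adj v u ∧ σ u = σ r}.ncard * f r := by
  classical
  have h1 : ∑ u ∈ univ.filter (fun u => σ u = σ r), (if G.Adj v u then f u else 0)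
      = ∑ u ∈ univ.filter (fun u => σ u = σ r), (if G.Adj v u then 1 else 0) * f r := by
    refine Finset.sum_congr rfl fun u hu => ?_
    rcases Finset.mem_filter.mp hu with ⟨-, h⟩
    rw [hf u r h]
    by_cases hadj : G.Adj v u <;> simp [hadj]
  rw [h1, ← Finset.sum_mul]
  congr 1
  rw [ncard_eq_sum, Finset.sum_filter]
  refine Finset.sum_congr rfl fun u _ => ?_
  by_cases h1 : σ u = σ r <;> by_cases h2 : G.Adj v u <;> simp [h1, h2]

open Finset in
private lemma equitable_invariant {V D : Type*} [Fintype V] (G : SimpleGraph V)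
    (σ : V → D) (hσ : Sassy.Equitable G σ) (f : V → ℕ)
    (hf : ∀ v w, σ v = σ w → f v = f w) :
    ∀ v w, σ v = σ w → (∑ u, if G.Adj v u then f u else 0) = ∑ u, if G.Adj w u then f u else 0 := by
  classical
  intro v w hvw
  rw [← Finset.sum_fiberwise_of_maps_to (t := univ.image σ)
      (fun x _ => Finset.mem_image_of_mem σ (Finset.mem_univ x)) (fun u => if G.Adj v u then f u else 0),
    ← Finset.sum_fiberwise_of_maps_to (t := univ.image σ)
      (fun x _ => Finset.mem_image_of_mem σ (Finset.mem_univ x)) (fun u => if G.Adj w u then f u else 0)]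
  refine Finset.sum_congr rfl fun d hd => ?_
  obtain ⟨r, -, hr⟩ := Finset.mem_image.mp hd
  subst hr
  rw [sum_class G σ f hf v r, sum_class G σ f hf w r, hσ v w hvw (σ r)]

/-- transfer equitability along partitions with same fibers -/
private lemma equitable_congr {V D E : Type*} (G : SimpleGraph V) (σ : V → D) (τ : V → E)
    (h : ∀ v w, σ v = σ w ↔ τ v = τ w) (hσ : Sassy.Equitable G σ) : Sassy.Equitable G τ := by
  intro v w hvw c
  by_cases hc : ∃ u, τ u = c
  · obtain ⟨u0, hu0⟩ := hc
    have e1 : ∀ x : V, {u | G.Adj x u ∧ τ u = c} = {u | G.Adj x u ∧ σ u = σ u0} := by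
      intro x; ext u
      simp only [Set.mem_setOf_eq, h u u0, hu0]
    rw [e1 v, e1 w]
    exact hσ v w ((h v w).mpr hvw) (σ u0)
  · push_neg at hc
    have e1 : ∀ x : V, {u | G.Adj x u ∧ τ u = c} = ∅ := by
      intro x; ext u; simp [hc u]
    rw [e1 v, e1 w]


/-- Every finite colored graph admits a coarsest equitable refinement. -/
theorem stmt1 {V C : Type*} [Fintype V] (G : SimpleGraph V) (π : V → C) :
    ∃ π' : V → ℕ,
      Sassy.Equitable G π' ∧ (∀ v w, π' v = π' w → π v = π w) ∧
      ∀ (D : Type*) (σ : V → D), Sassy.Equitable G σ → (∀ v w, σ v = σ w → π v = π w) →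
        ∀ v w, σ v = σ w → π' v = π' w := by
  classical
  set F : Set (Setoid V) :=
    {p | Sassy.Equitable G (fun v => (Quotient.mk p v : Quotient p)) ∧ ∀ v w, p v w → π v = π w}
    with hF
  set s : Setoid V := sSup F with hs
  set q : V → Quotient s := fun v => Quotient.mk s v with hq
  -- quotient map fibers
  have hqiff : ∀ v w, q v = q w ↔ s v w := fun v w => Quotient.eq
  -- q is equitable
  have hqeq : Sassy.Equitable G q := by
    intro v w hvw c
    set f : V → ℕ := fun u => if q u = c then 1 else 0 with hf
    have hfresp : ∀ x y, s x y → f x = f y := by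
      intro x y hxy
      simp only [hf, (hqiff x y).mpr hxy]
    have key : s ≤ Setoid.ker (fun v => ∑ u, if G.Adj v u then f u else 0) := by
      apply sSup_le
      intro p hp
      rw [Setoid.le_def]
      intro x y hxy
      rw [Setoid.ker_def]
      exact equitable_invariant G (fun v => (Quotient.mk p v : Quotient p)) hp.1 f
        (fun a b hab => hfresp a b (Setoid.le_def.mp (le_sSup hp) (Quotient.eq.mp hab)))
        x y (Quotient.sound hxy)
    have hN := Setoid.ker_def.mp (Setoid.le_def.mp key ((hqiff v w).mp hvw))
    have e1 : ∀ x : V, {u | G.Adj x u ∧ q u = c}.ncard = ∑ u, if G.Adj x u then f u else 0 := by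
      intro x
      rw [ncard_eq_sum]
      refine Finset.sum_congr rfl fun u _ => ?_
      by_cases h1 : G.Adj x u <;> by_cases h2 : q u = c <;> simp [h1, h2, hf]
    rw [e1 v, e1 w, hN]
  -- q refines π
  have hsref : ∀ v w, s v w → π v = π w := by
    intro v w hvw
    have : s ≤ Setoid.ker π := sSup_le fun p hp => Setoid.le_def.mpr fun hxy => hp.2 _ _ hxy
    exact Setoid.ker_def.mp (Setoid.le_def.mp this hvw)
  -- encode into ℕ
  have : Finite (Quotient s) := Quotient.finite s
  obtain ⟨e, he⟩ := (countable_iff_exists_injective (Quotient s)).mp inferInstance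
  refine ⟨fun v => e (q v), ?_, ?_, ?_⟩
  · exact equitable_congr G q _ (fun v w => ⟨fun h => by rw [h], fun h => he h⟩) hqeq
  · intro v w h
    exact hsref v w ((hqiff v w).mp (he h))
  · intro D σ hσeq hσref v w hvw
    have hker : Setoid.ker σ ∈ F := by
      constructor
      · refine equitable_congr G σ _ (fun a b => ?_) hσeq
        rw [Quotient.eq]
        exact (Setoid.ker_def (f := σ)).symm
      · intro a b hab
        exact hσref a b (Setoid.ker_def.mp hab)
    have : Setoid.ker σ ≤ s := le_sSup hker
    have hsvw : s v w := Setoid.le_def.mp this (Setoid.ker_def.mpr hvw)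
    show e (q v) = e (q w)
    exact congrArg e ((hqiff v w).mpr hsvw)
end

section
/- Let G=(V,E,π) be a colored graph with equitable coloring π, and let C be a color class in which every vertex has degree 1 with all neighbors lying in a distinct color class P. Partition C into C₁,…,C_m where C_i is the set of vertices of C adjacent to p_i ∈ P. Let G' = G minus C (with coloring restricted). Then: (1) every automorphism of G restricts to an automorphism of G'; (2) every automorphism of G' lifts to an automorphism of G (necessarily |C_i| = |C_j| whenever a lift is required to map p_i to p_j, and this holds since π is equitable); and (3) the kernel of the restriction homomorphism Aut(G) → Aut(G') is isomorphic to the direct product of the symmetric groups Sym(C_i), i=1,…,m. -/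
namespace Stmt4Aux

variable {V C : Type*} {G : SimpleGraph V} {π : V → C} {c cP : C}

/-- The restriction homomorphism. -/
def resHom (G : SimpleGraph V) (π : V → C) (c : C) : ↥(Sassy.Aut G π) →*
    ↥(Sassy.Aut (G.induce {v : V | π v ≠ c}) (fun v => π v.1)) where
  toFun φ :=
    ⟨φ.1.subtypePerm (fun v => not_congr (by rw [(φ.2.2 v)])),
      ⟨fun v w => φ.2.1 v.1 w.1, fun v => φ.2.2 v.1⟩⟩
  map_one' := rfl
  map_mul' a b := rfl

lemma ker_fix (φ : ↥((resHom G π c).ker)) (v : V) (h : ¬ π v = c) :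
    φ.1.1 v = v := by
  have h1 : resHom G π c φ.1 = 1 := φ.2
  exact congrArg Subtype.val (Equiv.ext_iff.mp (congrArg Subtype.val h1) ⟨v, h⟩)

section nb
variable (hdeg : ∀ v, π v = c → (G.neighborSet v).ncard = 1)

noncomputable def nb (v : V) (h : π v = c) : V :=
  (Set.ncard_eq_one.mp (hdeg v h)).choose

lemma adj_iff_nb (v : V) (h : π v = c) (w : V) :
    G.Adj v w ↔ w = nb hdeg v h := by
  rw [← SimpleGraph.mem_neighborSet, (Set.ncard_eq_one.mp (hdeg v h)).choose_spec,
    Set.mem_singleton_iff]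
  rfl

lemma adj_nb (v : V) (h : π v = c) : G.Adj v (nb hdeg v h) :=
  (adj_iff_nb hdeg v h _).mpr rfl

variable (hnbr : ∀ v w, π v = c → G.Adj v w → π w = cP)

include hnbr in
lemma color_nb (v : V) (h : π v = c) : π (nb hdeg v h) = cP :=
  hnbr v _ h (adj_nb hdeg v h)

/-- decomposition of the color class `c` into fibers over `cP` -/
noncomputable def d2 : {v : V // π v = c} ≃
    Σ q : {w : V // π w = cP}, {v : V // π v = c ∧ G.Adj v q.1} where
  toFun v := ⟨⟨nb hdeg v.1 v.2, color_nb hdeg hnbr v.1 v.2⟩,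
    ⟨v.1, v.2, adj_nb hdeg v.1 v.2⟩⟩
  invFun x := ⟨x.2.1, x.2.2.1⟩
  left_inv v := rfl
  right_inv := by
    rintro ⟨q, v, hv, hav⟩
    have hq : (⟨nb hdeg v hv, color_nb hdeg hnbr v hv⟩ : {w : V // π w = cP}) = q :=
      Subtype.ext ((adj_iff_nb hdeg v hv q.1).mp hav).symm
    subst hq
    rfl

/-- lift a permutation of the reduced graph together with fiber bijections -/
noncomputable def liftPerm (ψP : Equiv.Perm {w : V // π w = cP})
    (E : ∀ q : {w : V // π w = cP},
      {v : V // π v = c ∧ G.Adj v q.1} ≃ {v : V // π v = c ∧ G.Adj v (ψP q).1})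
    (ψS : Equiv.Perm ↥{v : V | π v ≠ c}) : Equiv.Perm V :=
  (@Equiv.sumCompl V (fun v => π v = c) (Classical.decPred _)).symm.trans
    ((Equiv.sumCongr
        ((d2 hdeg hnbr).trans ((Equiv.sigmaCongr ψP E).trans (d2 hdeg hnbr).symm)) ψS).trans
      (@Equiv.sumCompl V (fun v => π v = c) (Classical.decPred _)))

lemma liftPerm_apply_neg (ψP) (E) (ψS) (v : V) (h : ¬ π v = c) :
    liftPerm hdeg hnbr ψP E ψS v = (ψS ⟨v, h⟩).1 := by
  simp only [liftPerm, Equiv.trans_apply]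
  rw [show (@Equiv.sumCompl V (fun v => π v = c) (Classical.decPred _)).symm v
      = Sum.inr ⟨v, h⟩ from dif_neg h]
  rfl

lemma liftPerm_apply_pos (ψP) (E) (ψS) (v : V) (h : π v = c) :
    liftPerm hdeg hnbr ψP E ψS v
      = (E ⟨nb hdeg v h, color_nb hdeg hnbr v h⟩ ⟨v, h, adj_nb hdeg v h⟩).1 := by
  simp only [liftPerm, Equiv.trans_apply]
  rw [show (@Equiv.sumCompl V (fun v => π v = c) (Classical.decPred _)).symm v
      = Sum.inl ⟨v, h⟩ from dif_pos h]
  rfl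

include hdeg hnbr in
lemma liftPerm_isAut (hne : c ≠ cP) (ψP) (E) (ψS)
    (hcol : ∀ x : ↥{v : V | π v ≠ c}, π (ψS x).1 = π x.1)
    (hadjS : ∀ a b : ↥{v : V | π v ≠ c}, G.Adj (ψS a).1 (ψS b).1 ↔ G.Adj a.1 b.1)
    (hPS : ∀ (q : V) (hq : π q = cP) (hq' : ¬ π q = c),
      (ψS ⟨q, hq'⟩).1 = (ψP ⟨q, hq⟩).1) :
    Sassy.IsAut G π (liftPerm hdeg hnbr ψP E ψS) := by
  set Φ := liftPerm hdeg hnbr ψP E ψS with hΦ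
  have hΦpos : ∀ v (h : π v = c), π (Φ v) = c := by
    intro v h
    rw [hΦ, liftPerm_apply_pos hdeg hnbr ψP E ψS v h]
    exact (E _ _).2.1
  have key : ∀ v w (hv : π v = c) (hw : ¬ π w = c),
      G.Adj (Φ v) (Φ w) ↔ G.Adj v w := by
    intro v w hv hw
    have hc1 : π (Φ v) = c := hΦpos v hv
    have hq' : ¬ π (nb hdeg v hv) = c :=
      fun hcc => hne (hcc.symm.trans (color_nb hdeg hnbr v hv))
    have hnbΦ : nb hdeg (Φ v) hc1
        = (ψP ⟨nb hdeg v hv, color_nb hdeg hnbr v hv⟩).1 := by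
      refine ((adj_iff_nb hdeg (Φ v) hc1 _).mp ?_).symm
      have h2 := (E ⟨nb hdeg v hv, color_nb hdeg hnbr v hv⟩ ⟨v, hv, adj_nb hdeg v hv⟩).2.2
      rw [hΦ, liftPerm_apply_pos hdeg hnbr ψP E ψS v hv]
      exact h2
    rw [show Φ w = (ψS ⟨w, hw⟩).1 from liftPerm_apply_neg hdeg hnbr ψP E ψS w hw,
      adj_iff_nb hdeg (Φ v) hc1, adj_iff_nb hdeg v hv, hnbΦ,
      ← hPS (nb hdeg v hv) (color_nb hdeg hnbr v hv) hq']
    constructor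
    · intro hh
      exact congrArg Subtype.val (ψS.injective (Subtype.ext hh))
    · intro hh
      exact congrArg (fun z => (ψS z).1) (Subtype.ext hh)
  constructor
  · intro v w
    by_cases hv : π v = c <;> by_cases hw : π w = c
    · constructor
      · intro h
        exact absurd ((hΦpos w hw).symm.trans (hnbr _ _ (hΦpos v hv) h)) hne
      · intro h
        exact absurd (hw.symm.trans (hnbr v w hv h)) hne
    · exact key v w hv hw
    · exact (G.adj_comm _ _).trans ((key w v hw hv).trans (G.adj_comm _ _))
    · rw [show Φ v = (ψS ⟨v, hv⟩).1 from liftPerm_apply_neg hdeg hnbr ψP E ψS v hv,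
        show Φ w = (ψS ⟨w, hw⟩).1 from liftPerm_apply_neg hdeg hnbr ψP E ψS w hw]
      exact hadjS _ _
  · intro v
    by_cases h : π v = c
    · exact (hΦpos v h).trans h.symm
    · rw [hΦ, liftPerm_apply_neg hdeg hnbr ψP E ψS v h]
      exact hcol ⟨v, h⟩

end nb
end Stmt4Aux

namespace Stmt4Aux
variable {V C : Type*} {G : SimpleGraph V} {π : V → C} {c cP : C}

/-- the map from the kernel of restriction to the product of fiber symmetric groups -/
def kerMap (hne : c ≠ cP) : ↥((resHom G π c).ker) →*
    ((q : {w : V // π w = cP}) → Equiv.Perm {v : V // π v = c ∧ G.Adj v q.1}) where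
  toFun φ q :=
    have hq : φ.1.1 q.1 = q.1 :=
      ker_fix φ q.1 (fun hcc => hne (hcc.symm ▸ q.2 : c = cP))
    { toFun := fun x => ⟨φ.1.1 x.1, (φ.1.2.2 x.1).trans x.2.1, by
        have h2 := (φ.1.2.1 x.1 q.1).mpr x.2.2
        rwa [hq] at h2⟩
      invFun := fun x => ⟨φ.1.1⁻¹ x.1, by
        have hcol : π (φ.1.1⁻¹ x.1) = π x.1 :=
          (φ.1.2.2 (φ.1.1⁻¹ x.1)).symm.trans (congrArg π (Equiv.apply_symm_apply φ.1.1 x.1))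
        refine ⟨hcol.trans x.2.1, ?_⟩
        have h2 : G.Adj (φ.1.1 (φ.1.1⁻¹ x.1)) (φ.1.1 q.1) := by
          rw [show φ.1.1 (φ.1.1⁻¹ x.1) = x.1 from Equiv.apply_symm_apply _ _, hq]; exact x.2.2
        exact (φ.1.2.1 _ _).mp h2⟩
      left_inv := fun x => Subtype.ext (Equiv.symm_apply_apply φ.1.1 x.1)
      right_inv := fun x => Subtype.ext (Equiv.apply_symm_apply φ.1.1 x.1) }
  map_one' := rfl
  map_mul' a b := rfl

end Stmt4Aux

/-- Removing a color class C of degree-1 vertices whose neighbors lie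
in a distinct color class P: restriction is a surjective homomorphism onto the
automorphism group of the reduced graph, with kernel the direct product of the
symmetric groups on the fibers C_p = {v ∈ C | v adjacent to p}, p ∈ P. -/
theorem stmt4 {V C : Type*} [Fintype V] (G : SimpleGraph V) (π : V → C)
    (hequit : Sassy.Equitable G π) (c cP : C) (hne : c ≠ cP)
    (hdeg : ∀ v, π v = c → (G.neighborSet v).ncard = 1)
    (hnbr : ∀ v w, π v = c → G.Adj v w → π w = cP) :
    ∃ p : ↥(Sassy.Aut G π) →*
        ↥(Sassy.Aut (G.induce {v : V | π v ≠ c}) (fun v => π v.1)),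
      (∀ (φ : ↥(Sassy.Aut G π)) (v : ↥{v : V | π v ≠ c}), ((p φ).1 v).1 = φ.1 v.1) ∧
      Function.Surjective p ∧
      Nonempty (↥p.ker ≃*
        ((q : {w : V // π w = cP}) → Equiv.Perm {v : V // π v = c ∧ G.Adj v q.1})) := by
  classical
  refine ⟨Stmt4Aux.resHom G π c, fun φ v => rfl, ?_, ?_⟩
  · -- surjectivity
    rintro ⟨ψ, hψ1, hψ2⟩
    have hqne : ∀ q : V, π q = cP → ¬ π q = c := fun q hq hcc => hne (hcc.symm.trans hq)
    have hψ2' : ∀ x, π (ψ.symm x).1 = π x.1 := fun x =>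
      (hψ2 (ψ.symm x)).symm.trans (congrArg (fun z => π z.1) (ψ.apply_symm_apply x))
    let ψP : Equiv.Perm {w : V // π w = cP} :=
      { toFun := fun q => ⟨(ψ ⟨q.1, hqne q.1 q.2⟩).1, (hψ2 ⟨q.1, hqne q.1 q.2⟩).trans q.2⟩
        invFun := fun q => ⟨(ψ.symm ⟨q.1, hqne q.1 q.2⟩).1,
          (hψ2' ⟨q.1, hqne q.1 q.2⟩).trans q.2⟩
        left_inv := fun q => by
          apply Subtype.ext
          simp only [Subtype.coe_eta, Equiv.symm_apply_apply]
        right_inv := fun q => by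
          apply Subtype.ext
          simp only [Subtype.coe_eta, Equiv.apply_symm_apply] }
    have hfib : ∀ q q' : {w : V // π w = cP},
        Nonempty ({v : V // π v = c ∧ G.Adj v q.1} ≃ {v : V // π v = c ∧ G.Adj v q'.1}) := by
      intro q q'
      refine Finite.card_eq.mp ?_
      have e1 : ∀ r : V, {v : V | π v = c ∧ G.Adj v r} = {u : V | G.Adj r u ∧ π u = c} := by
        intro r; ext u
        constructor
        · rintro ⟨h1, h2⟩; exact ⟨h2.symm, h1⟩
        · rintro ⟨h1, h2⟩; exact ⟨h2, h1.symm⟩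
      calc Nat.card {v : V // π v = c ∧ G.Adj v q.1}
          = ({v : V | π v = c ∧ G.Adj v q.1}).ncard := Nat.card_coe_set_eq _
        _ = ({u : V | G.Adj q.1 u ∧ π u = c}).ncard := by rw [e1]
        _ = ({u : V | G.Adj q'.1 u ∧ π u = c}).ncard := hequit q.1 q'.1 (q.2.trans q'.2.symm) c
        _ = ({v : V | π v = c ∧ G.Adj v q'.1}).ncard := by rw [e1]
        _ = Nat.card {v : V // π v = c ∧ G.Adj v q'.1} := (Nat.card_coe_set_eq _).symm
    let E : ∀ q : {w : V // π w = cP},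
        {v : V // π v = c ∧ G.Adj v q.1} ≃ {v : V // π v = c ∧ G.Adj v (ψP q).1} :=
      fun q => Classical.choice (hfib q (ψP q))
    have hAut : Sassy.IsAut G π (Stmt4Aux.liftPerm hdeg hnbr ψP E ψ) :=
      Stmt4Aux.liftPerm_isAut hdeg hnbr hne ψP E ψ (fun x => hψ2 x)
        (fun a b => hψ1 a b) (fun q hq hq' => rfl)
    refine ⟨⟨Stmt4Aux.liftPerm hdeg hnbr ψP E ψ, hAut⟩, ?_⟩
    exact Subtype.ext (Equiv.ext fun v =>
      Subtype.ext (Stmt4Aux.liftPerm_apply_neg hdeg hnbr ψP E ψ v.1 v.2))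
  · -- kernel
    refine ⟨MulEquiv.ofBijective (Stmt4Aux.kerMap hne) ⟨?_, ?_⟩⟩
    · intro φ φ' h
      apply Subtype.ext
      apply Subtype.ext
      apply Equiv.ext
      intro v
      by_cases hv : π v = c
      · exact congrArg (fun f => ((f ⟨Stmt4Aux.nb hdeg v hv, Stmt4Aux.color_nb hdeg hnbr v hv⟩
          ⟨v, hv, Stmt4Aux.adj_nb hdeg v hv⟩).1 : V)) h
      · rw [Stmt4Aux.ker_fix φ v hv, Stmt4Aux.ker_fix φ' v hv]
    · intro σ
      have hAut : Sassy.IsAut G π (Stmt4Aux.liftPerm hdeg hnbr 1 σ 1) :=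
        Stmt4Aux.liftPerm_isAut hdeg hnbr hne 1 σ 1 (fun x => rfl)
          (fun a b => Iff.rfl) (fun q hq hq' => rfl)
      have hker : (⟨Stmt4Aux.liftPerm hdeg hnbr 1 σ 1, hAut⟩ : ↥(Sassy.Aut G π))
          ∈ (Stmt4Aux.resHom G π c).ker := by
        rw [MonoidHom.mem_ker]
        exact Subtype.ext (Equiv.ext fun v =>
          Subtype.ext (Stmt4Aux.liftPerm_apply_neg hdeg hnbr 1 σ 1 v.1 v.2))
      refine ⟨⟨⟨Stmt4Aux.liftPerm hdeg hnbr 1 σ 1, hAut⟩, hker⟩, ?_⟩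
      funext q
      apply Equiv.ext
      rintro ⟨v, hv, hav⟩
      apply Subtype.ext
      show Stmt4Aux.liftPerm hdeg hnbr 1 σ 1 v = (σ q ⟨v, hv, hav⟩).1
      rw [Stmt4Aux.liftPerm_apply_pos hdeg hnbr 1 σ 1 v hv]
      have hq : (⟨Stmt4Aux.nb hdeg v hv, Stmt4Aux.color_nb hdeg hnbr v hv⟩ :
          {w : V // π w = cP}) = q :=
        Subtype.ext ((Stmt4Aux.adj_iff_nb hdeg v hv q.1).mp hav).symm
      subst hq
      rfl
end

section
/- In the setting of paths with unique endpoints (distinct color classes X=C₀,C₁,…,C_t,C_{t+1}=Y with internal classes of degree-2 vertices, each x ∈ X having exactly one neighbor in C₁, and no edges between X and Y), let G' be obtained by deleting C₁ ∪ ⋯ ∪ C_t and adding an edge {x,y} for every unique path (x,c₁,…,c_t,y). Then the restriction map Aut(G,π) → Aut(G',π|_{V'}) is a well-defined surjective group homomorphism (symmetry preservation and symmetry lifting hold). -/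
namespace Sassy

/-- A path `(x, c₁, …, c_t, y)` through the color classes `c 0, c 1, …, c (t+1)`,
encoded as a function `w : Fin (t+2) → V`. -/
def IsUPath {V C : Type*} (G : SimpleGraph V) (π : V → C) (c : ℕ → C) (t : ℕ)
    (x : V) (w : Fin (t + 2) → V) : Prop :=
  w ⟨0, by omega⟩ = x ∧ (∀ i : Fin (t + 2), π (w i) = c i.1) ∧
    ∀ i : ℕ, (h : i + 1 < t + 2) → G.Adj (w ⟨i, by omega⟩) (w ⟨i + 1, h⟩)

end Sassy

namespace Sassy9

open scoped Classical

noncomputable def nxt {V C : Type*} [Nonempty V] (G : SimpleGraph V) (π : V → C) (c : ℕ → C)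
    (i : ℕ) (v : V) : V :=
  Classical.epsilon fun u => G.Adj v u ∧ π u = c (i + 1)

noncomputable def pathFun {V C : Type*} [Nonempty V] (G : SimpleGraph V) (π : V → C)
    (c : ℕ → C) (x : V) : ℕ → V
  | 0 => x
  | i + 1 => nxt G π c i (pathFun G π c x i)

noncomputable def idx {V C : Type*} (π : V → C) (c : ℕ → C) (t : ℕ) (v : V) : ℕ :=
  Classical.epsilon fun i => 1 ≤ i ∧ i ≤ t ∧ π v = c i

noncomputable def src {V C : Type*} [Nonempty V] (G : SimpleGraph V) (π : V → C)
    (c : ℕ → C) (t : ℕ) (v : V) : V :=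
  Classical.epsilon fun x => π x = c 0 ∧ pathFun G π c x (idx π c t v) = v

noncomputable def extFun {V : Type*} (S : Set V) (ψ : Equiv.Perm S) (v : V) : V :=
  if h : v ∈ S then (ψ ⟨v, h⟩).1 else v

lemma extFun_mem {V : Type*} (S : Set V) (ψ : Equiv.Perm S) (v : V) (h : v ∈ S) :
    extFun S ψ v = (ψ ⟨v, h⟩).1 := dif_pos h

noncomputable def lift {V C : Type*} [Nonempty V] (G : SimpleGraph V) (π : V → C)
    (c : ℕ → C) (t : ℕ)
    (ψ : Equiv.Perm {v : V | ∀ i, 1 ≤ i → i ≤ t → π v ≠ c i}) (v : V) : V :=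
  if v ∈ {v : V | ∀ i, 1 ≤ i → i ≤ t → π v ≠ c i} then
    extFun _ ψ v
  else pathFun G π c (extFun _ ψ (src G π c t v)) (idx π c t v)

lemma lift_mem {V C : Type*} [Nonempty V] (G : SimpleGraph V) (π : V → C)
    (c : ℕ → C) (t : ℕ)
    (ψ : Equiv.Perm {v : V | ∀ i, 1 ≤ i → i ≤ t → π v ≠ c i}) (v : V)
    (h : v ∈ {v : V | ∀ i, 1 ≤ i → i ≤ t → π v ≠ c i}) :
    lift G π c t ψ v = extFun _ ψ v := if_pos h

lemma lift_not_mem {V C : Type*} [Nonempty V] (G : SimpleGraph V) (π : V → C)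
    (c : ℕ → C) (t : ℕ)
    (ψ : Equiv.Perm {v : V | ∀ i, 1 ≤ i → i ≤ t → π v ≠ c i}) (v : V)
    (h : ¬ v ∈ {v : V | ∀ i, 1 ≤ i → i ≤ t → π v ≠ c i}) :
    lift G π c t ψ v = pathFun G π c (extFun _ ψ (src G π c t v)) (idx π c t v) := if_neg h

lemma pathFun_zero {V C : Type*} [Nonempty V] (G : SimpleGraph V) (π : V → C)
    (c : ℕ → C) (x : V) : pathFun G π c x 0 = x := rfl

lemma pathFun_succ {V C : Type*} [Nonempty V] (G : SimpleGraph V) (π : V → C)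
    (c : ℕ → C) (x : V) (i : ℕ) :
    pathFun G π c x (i + 1) = nxt G π c i (pathFun G π c x i) := rfl

end Sassy9

/-- Replacing the unique paths from X = c 0 to Y = c (t+1) by
direct edges: the restriction map from Aut(G,π) to the automorphism group of
the reduced graph G' (deleting C₁ ∪ ⋯ ∪ C_t and adding an edge {x,y} for each
unique path) is a well-defined surjective group homomorphism. -/
theorem stmt9 {V C : Type*} [Fintype V] (G : SimpleGraph V) (π : V → C)
    (hequit : Sassy.Equitable G π) (t : ℕ) (c : ℕ → C)
    (hinj : ∀ i j, i ≤ t + 1 → j ≤ t + 1 → c i = c j → i = j)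
    (hXY : ∀ u v, π u = c 0 → π v = c (t + 1) → ¬ G.Adj u v)
    (hdeg2 : ∀ i, 1 ≤ i → i ≤ t → ∀ v, π v = c i →
      (G.neighborSet v).ncard = 2 ∧ (∃ u, G.Adj v u ∧ π u = c (i - 1)) ∧
        (∃ u, G.Adj v u ∧ π u = c (i + 1)))
    (hX1 : ∀ x, π x = c 0 → ∃! u, G.Adj x u ∧ π u = c 1)
    (G' : SimpleGraph ↥{v : V | ∀ i, 1 ≤ i → i ≤ t → π v ≠ c i})
    (hG' : ∀ u v : ↥{v : V | ∀ i, 1 ≤ i → i ≤ t → π v ≠ c i},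
      G'.Adj u v ↔ (G.Adj u.1 v.1 ∨
        (∃ w : Fin (t + 2) → V, Sassy.IsUPath G π c t u.1 w ∧ w (Fin.last (t + 1)) = v.1) ∨
        (∃ w : Fin (t + 2) → V, Sassy.IsUPath G π c t v.1 w ∧ w (Fin.last (t + 1)) = u.1))) :
    ∃ p : ↥(Sassy.Aut G π) →* ↥(Sassy.Aut G' (fun v => π v.1)),
      (∀ (φ : ↥(Sassy.Aut G π)) (v : ↥{v : V | ∀ i, 1 ≤ i → i ≤ t → π v ≠ c i}),
        ((p φ).1 v).1 = φ.1 v.1) ∧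
      Function.Surjective p := by
  classical
  rcases isEmpty_or_nonempty V with hV | hV
  · refine ⟨1, fun φ v => (hV.false v.1).elim, fun ψ' => ⟨1, ?_⟩⟩
    exact Subtype.ext (Equiv.ext fun v => (hV.false v.1).elim)
  -- basic color facts
  have hc0S : ∀ v : V, π v = c 0 → ∀ i, 1 ≤ i → i ≤ t → π v ≠ c i := by
    intro v hv i h1 h2 hvi
    have := hinj 0 i (by omega) (by omega) (hv.symm.trans hvi)
    omega
  have hct1S : ∀ v : V, π v = c (t + 1) → ∀ i, 1 ≤ i → i ≤ t → π v ≠ c i := by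
    intro v hv i h1 h2 hvi
    have := hinj (t + 1) i (by omega) (by omega) (hv.symm.trans hvi)
    omega
  -- the two neighbors of an internal vertex
  have two_nbrs : ∀ i, 1 ≤ i → i ≤ t → ∀ v, π v = c i →
      ∃ a b : V, G.Adj v a ∧ G.Adj v b ∧ π a = c (i - 1) ∧ π b = c (i + 1) ∧
        ∀ u, G.Adj v u → u = a ∨ u = b := by
    intro i h1 h2 v hv
    obtain ⟨hcard, ⟨a, ha, hπa⟩, ⟨b, hb, hπb⟩⟩ := hdeg2 i h1 h2 v hv
    have hab : a ≠ b := by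
      intro h; subst h
      have := hinj (i - 1) (i + 1) (by omega) (by omega) (hπa.symm.trans hπb)
      omega
    have hsub : ({a, b} : Set V) ⊆ G.neighborSet v := by
      intro u hu
      simp only [Set.mem_insert_iff, Set.mem_singleton_iff] at hu
      rcases hu with rfl | rfl
      · exact ha
      · exact hb
    have heq : ({a, b} : Set V) = G.neighborSet v :=
      Set.eq_of_subset_of_ncard_le hsub (by rw [hcard, Set.ncard_pair hab])
        (Set.toFinite _)
    refine ⟨a, b, ha, hb, hπa, hπb, fun u hu => ?_⟩
    have : u ∈ ({a, b} : Set V) := by rw [heq]; exact hu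
    simpa using this
  have fwdU : ∀ i, 1 ≤ i → i ≤ t → ∀ v, π v = c i →
      ∃! u, G.Adj v u ∧ π u = c (i + 1) := by
    intro i h1 h2 v hv
    obtain ⟨a, b, ha, hb, hπa, hπb, hall⟩ := two_nbrs i h1 h2 v hv
    refine ⟨b, ⟨hb, hπb⟩, ?_⟩
    rintro u ⟨hu, hπu⟩
    rcases hall u hu with rfl | rfl
    · exfalso
      have := hinj (i - 1) (i + 1) (by omega) (by omega) (hπa.symm.trans hπu)
      omega
    · rfl
  have bwdU : ∀ i, 1 ≤ i → i ≤ t → ∀ v, π v = c i →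
      ∃! u, G.Adj v u ∧ π u = c (i - 1) := by
    intro i h1 h2 v hv
    obtain ⟨a, b, ha, hb, hπa, hπb, hall⟩ := two_nbrs i h1 h2 v hv
    refine ⟨a, ⟨ha, hπa⟩, ?_⟩
    rintro u ⟨hu, hπu⟩
    rcases hall u hu with rfl | rfl
    · rfl
    · exfalso
      have := hinj (i + 1) (i - 1) (by omega) (by omega) (hπb.symm.trans hπu)
      omega
  -- the canonical path
  have pathStep : ∀ x : V, π x = c 0 → ∀ i, i ≤ t →
      G.Adj (Sassy9.pathFun G π c x i) (Sassy9.pathFun G π c x (i + 1)) ∧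
        π (Sassy9.pathFun G π c x (i + 1)) = c (i + 1) := by
    intro x hx i
    induction i with
    | zero =>
      intro _
      have hex : ∃ u, G.Adj (Sassy9.pathFun G π c x 0) u ∧ π u = c (0 + 1) := by
        obtain ⟨u, hu, -⟩ := hX1 x hx
        exact ⟨u, hu⟩
      rw [Sassy9.pathFun_succ]
      simp only [Sassy9.nxt]
      exact Classical.epsilon_spec hex
    | succ n ih =>
      intro h
      have hn := ih (by omega)
      have hex : ∃ u, G.Adj (Sassy9.pathFun G π c x (n + 1)) u ∧ π u = c (n + 1 + 1) :=
        (fwdU (n + 1) (by omega) (by omega) _ hn.2).exists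
      rw [Sassy9.pathFun_succ]
      simp only [Sassy9.nxt]
      exact Classical.epsilon_spec hex
  have pathColor : ∀ x : V, π x = c 0 → ∀ i, i ≤ t + 1 →
      π (Sassy9.pathFun G π c x i) = c i := by
    intro x hx i hi
    cases i with
    | zero => rw [Sassy9.pathFun_zero]; exact hx
    | succ n => exact (pathStep x hx n (by omega)).2
  have isUP : ∀ x : V, π x = c 0 →
      Sassy.IsUPath G π c t x (fun i : Fin (t + 2) => Sassy9.pathFun G π c x i.1) := by
    intro x hx
    refine ⟨Sassy9.pathFun_zero G π c x, fun i => ?_, fun i h => ?_⟩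
    · exact pathColor x hx i.1 (by omega)
    · exact (pathStep x hx i (by omega)).1
  have pathUnique : ∀ (x : V) (w : Fin (t + 2) → V), Sassy.IsUPath G π c t x w →
      ∀ i (hi : i < t + 2), w ⟨i, hi⟩ = Sassy9.pathFun G π c x i := by
    rintro x w ⟨hw0, hwc, hwa⟩ i
    have hx : π x = c 0 := by rw [← hw0]; exact hwc ⟨0, by omega⟩
    induction i with
    | zero => intro hi; rw [Sassy9.pathFun_zero]; exact hw0
    | succ n ih =>
      intro hi
      have hadj : G.Adj (w ⟨n, Nat.lt_of_succ_lt hi⟩) (w ⟨n + 1, hi⟩) := hwa n hi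
      rw [ih (Nat.lt_of_succ_lt hi)] at hadj
      have hcol : π (w ⟨n + 1, hi⟩) = c (n + 1) := hwc ⟨n + 1, hi⟩
      have h2 := pathStep x hx n (by omega)
      rcases Nat.eq_zero_or_pos n with rfl | hpos
      · obtain ⟨u, -, huniq⟩ := hX1 x hx
        have e1 := huniq _ ⟨hadj, hcol⟩
        have e2 := huniq _ ⟨h2.1, h2.2⟩
        exact e1.trans e2.symm
      · have hcoln : π (Sassy9.pathFun G π c x n) = c n := pathColor x hx n (by omega)
        obtain ⟨u, -, huniq⟩ := fwdU n hpos (by omega) _ hcoln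
        exact (huniq _ ⟨hadj, hcol⟩).trans (huniq _ ⟨h2.1, h2.2⟩).symm
  -- existence and uniqueness of the source of an internal vertex
  have srcEx : ∀ i, 1 ≤ i → i ≤ t → ∀ v, π v = c i →
      ∃ x, π x = c 0 ∧ Sassy9.pathFun G π c x i = v := by
    intro i
    induction i with
    | zero => intro h1; exact absurd h1 (by omega)
    | succ n ih =>
      intro h1 h2 v hv
      obtain ⟨-, ⟨u, hu, hπu⟩, -⟩ := hdeg2 (n + 1) h1 h2 v hv
      have hπu' : π u = c n := by simpa using hπu
      rcases Nat.eq_zero_or_pos n with rfl | hpos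
      · refine ⟨u, hπu', ?_⟩
        obtain ⟨z, -, huniq⟩ := hX1 u hπu'
        have e1 := huniq v ⟨hu.symm, hv⟩
        have e2 := huniq _ ⟨(pathStep u hπu' 0 (by omega)).1, (pathStep u hπu' 0 (by omega)).2⟩
        exact e2.trans e1.symm
      · obtain ⟨x, hx, hPx⟩ := ih hpos (by omega) u hπu'
        refine ⟨x, hx, ?_⟩
        obtain ⟨z, -, huniq⟩ := fwdU n hpos (by omega) u hπu'
        have e1 := huniq v ⟨hu.symm, hv⟩
        have hadj' : G.Adj u (Sassy9.pathFun G π c x (n + 1)) := by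
          rw [← hPx]; exact (pathStep x hx n (by omega)).1
        have e2 := huniq _ ⟨hadj', (pathStep x hx n (by omega)).2⟩
        exact e2.trans e1.symm
  have srcUniq : ∀ i, i ≤ t → ∀ x y, π x = c 0 → π y = c 0 →
      Sassy9.pathFun G π c x i = Sassy9.pathFun G π c y i → x = y := by
    intro i
    induction i with
    | zero => intro _ x y _ _ h; rw [Sassy9.pathFun_zero, Sassy9.pathFun_zero] at h; exact h
    | succ n ih =>
      intro h x y hx hy hP
      apply ih (by omega) x y hx hy
      have hv : π (Sassy9.pathFun G π c x (n + 1)) = c (n + 1) := pathColor x hx (n + 1) (by omega)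
      obtain ⟨u, -, huniq⟩ := bwdU (n + 1) (by omega) (by omega) _ hv
      have hax : G.Adj (Sassy9.pathFun G π c x (n + 1)) (Sassy9.pathFun G π c x n) ∧
          π (Sassy9.pathFun G π c x n) = c (n + 1 - 1) :=
        ⟨(pathStep x hx n (by omega)).1.symm, by simpa using pathColor x hx n (by omega)⟩
      have hay : G.Adj (Sassy9.pathFun G π c x (n + 1)) (Sassy9.pathFun G π c y n) ∧
          π (Sassy9.pathFun G π c y n) = c (n + 1 - 1) :=
        ⟨by rw [hP]; exact (pathStep y hy n (by omega)).1.symm,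
          by simpa using pathColor y hy n (by omega)⟩
      exact (huniq _ hax).trans (huniq _ hay).symm
  -- specification of idx and src
  have idxSpec : ∀ v : V, ¬ (∀ i, 1 ≤ i → i ≤ t → π v ≠ c i) →
      1 ≤ Sassy9.idx π c t v ∧ Sassy9.idx π c t v ≤ t ∧ π v = c (Sassy9.idx π c t v) := by
    intro v hv
    have hex : ∃ i, 1 ≤ i ∧ i ≤ t ∧ π v = c i := by
      push_neg at hv
      obtain ⟨i, h1, h2, h3⟩ := hv
      exact ⟨i, h1, h2, h3⟩
    exact Classical.epsilon_spec hex
  have idxEq : ∀ (v : V) i, ¬ (∀ i, 1 ≤ i → i ≤ t → π v ≠ c i) → 1 ≤ i → i ≤ t →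
      π v = c i → Sassy9.idx π c t v = i := by
    intro v i hv h1 h2 hvi
    obtain ⟨s1, s2, s3⟩ := idxSpec v hv
    exact hinj _ i (by omega) (by omega) (s3.symm.trans hvi)
  have srcSpec : ∀ v : V, ¬ (∀ i, 1 ≤ i → i ≤ t → π v ≠ c i) →
      π (Sassy9.src G π c t v) = c 0 ∧
        Sassy9.pathFun G π c (Sassy9.src G π c t v) (Sassy9.idx π c t v) = v := by
    intro v hv
    obtain ⟨s1, s2, s3⟩ := idxSpec v hv
    exact Classical.epsilon_spec (srcEx _ s1 s2 v s3)
  -- lifting paths through an automorphism of G'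
  have pathLift : ∀ ψ : Equiv.Perm {v : V | ∀ i, 1 ≤ i → i ≤ t → π v ≠ c i},
      Sassy.IsAut G' (fun v => π v.1) ψ → ∀ x : V, π x = c 0 → ∀ k, k ≤ t + 1 →
      Sassy9.lift G π c t ψ (Sassy9.pathFun G π c x k) =
        Sassy9.pathFun G π c (Sassy9.extFun _ ψ x) k := by
    intro ψ hψ x hx k hk
    have hxS : x ∈ {v : V | ∀ i, 1 ≤ i → i ≤ t → π v ≠ c i} := hc0S x hx
    have hx' : π (Sassy9.extFun _ ψ x) = c 0 := by
      rw [Sassy9.extFun_mem _ ψ x hxS]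
      exact (hψ.2 ⟨x, hxS⟩).trans hx
    by_cases hk0 : k = 0
    · subst hk0
      rw [Sassy9.pathFun_zero, Sassy9.pathFun_zero, Sassy9.lift_mem G π c t ψ x hxS]
    by_cases hkt : k = t + 1
    · subst hkt
      have hvS : Sassy9.pathFun G π c x (t + 1) ∈ {v : V | ∀ i, 1 ≤ i → i ≤ t → π v ≠ c i} :=
        hct1S _ (pathColor x hx (t + 1) le_rfl)
      rw [Sassy9.lift_mem G π c t ψ _ hvS, Sassy9.extFun_mem _ ψ _ hvS,
        Sassy9.extFun_mem _ ψ x hxS]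
      have hGadj : G'.Adj ⟨x, hxS⟩ ⟨Sassy9.pathFun G π c x (t + 1), hvS⟩ := by
        rw [hG']
        exact Or.inr (Or.inl ⟨fun i => Sassy9.pathFun G π c x i.1, isUP x hx, rfl⟩)
      have h2 := (hψ.1 _ _).mpr hGadj
      rw [hG'] at h2
      rcases h2 with hadj | ⟨w, hw, hlast⟩ | ⟨w, hw, hlast⟩
      · exact absurd hadj (hXY _ _ ((hψ.2 ⟨x, hxS⟩).trans hx)
          ((hψ.2 ⟨_, hvS⟩).trans (pathColor x hx (t + 1) le_rfl)))
      · have h3 : w (Fin.last (t + 1)) =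
            Sassy9.pathFun G π c ((ψ ⟨x, hxS⟩).1) (t + 1) :=
          pathUnique _ w hw (t + 1) (by omega)
        exact hlast.symm.trans h3
      · exfalso
        have h0 : π ((ψ ⟨_, hvS⟩).1) = c 0 := by rw [← hw.1]; exact hw.2.1 ⟨0, by omega⟩
        have h1 : π ((ψ ⟨_, hvS⟩).1) = c (t + 1) :=
          (hψ.2 _).trans (pathColor x hx (t + 1) le_rfl)
        have := hinj 0 (t + 1) (by omega) (by omega) (h0.symm.trans h1)
        omega
    · have hk1 : 1 ≤ k := by omega
      have hk2 : k ≤ t := by omega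
      have hπv : π (Sassy9.pathFun G π c x k) = c k := pathColor x hx k (by omega)
      have hvNS : ¬ (∀ i, 1 ≤ i → i ≤ t → π (Sassy9.pathFun G π c x k) ≠ c i) :=
        fun hS => hS k hk1 hk2 hπv
      rw [Sassy9.lift_not_mem G π c t ψ _ hvNS]
      have hidx : Sassy9.idx π c t (Sassy9.pathFun G π c x k) = k := idxEq _ k hvNS hk1 hk2 hπv
      have hsrc := srcSpec _ hvNS
      have h5 := hsrc.2
      rw [hidx] at h5
      have hsx : Sassy9.src G π c t (Sassy9.pathFun G π c x k) = x :=
        srcUniq k hk2 _ x hsrc.1 hx h5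
      rw [hsx, hidx]
  -- the lift preserves colors
  have liftColor : ∀ ψ : Equiv.Perm {v : V | ∀ i, 1 ≤ i → i ≤ t → π v ≠ c i},
      Sassy.IsAut G' (fun v => π v.1) ψ → ∀ v, π (Sassy9.lift G π c t ψ v) = π v := by
    intro ψ hψ v
    by_cases hv : ∀ i, 1 ≤ i → i ≤ t → π v ≠ c i
    · rw [Sassy9.lift_mem G π c t ψ v hv, Sassy9.extFun_mem _ ψ v hv]
      exact hψ.2 ⟨v, hv⟩
    · rw [Sassy9.lift_not_mem G π c t ψ v hv]
      obtain ⟨s1, s2, s3⟩ := idxSpec v hv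
      obtain ⟨h01, h02⟩ := srcSpec v hv
      have hx' : π (Sassy9.extFun _ ψ (Sassy9.src G π c t v)) = c 0 := by
        rw [Sassy9.extFun_mem _ ψ _ (hc0S _ h01)]
        exact (hψ.2 _).trans h01
      rw [pathColor _ hx' _ (by omega : Sassy9.idx π c t v ≤ t + 1), s3]
  -- the lift of an inverse is an inverse
  have liftInvFun : ∀ ψ₁ ψ₂ : Equiv.Perm {v : V | ∀ i, 1 ≤ i → i ≤ t → π v ≠ c i},
      Sassy.IsAut G' (fun v => π v.1) ψ₁ → Sassy.IsAut G' (fun v => π v.1) ψ₂ →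
      (∀ s, ψ₂ (ψ₁ s) = s) → ∀ v,
      Sassy9.lift G π c t ψ₂ (Sassy9.lift G π c t ψ₁ v) = v := by
    intro ψ₁ ψ₂ h1 h2 hinv v
    by_cases hv : ∀ i, 1 ≤ i → i ≤ t → π v ≠ c i
    · rw [Sassy9.lift_mem G π c t ψ₁ v hv, Sassy9.extFun_mem _ ψ₁ v hv]
      have hmem : ((ψ₁ ⟨v, hv⟩).1 : V) ∈ {v : V | ∀ i, 1 ≤ i → i ≤ t → π v ≠ c i} :=
        (ψ₁ ⟨v, hv⟩).2
      rw [Sassy9.lift_mem G π c t ψ₂ _ hmem, Sassy9.extFun_mem _ ψ₂ _ hmem]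
      have e : (⟨(ψ₁ ⟨v, hv⟩).1, hmem⟩ : {v : V | ∀ i, 1 ≤ i → i ≤ t → π v ≠ c i}) =
          ψ₁ ⟨v, hv⟩ := rfl
      rw [e, hinv]
    · obtain ⟨s1, s2, s3⟩ := idxSpec v hv
      obtain ⟨h01, h02⟩ := srcSpec v hv
      have hxS : Sassy9.src G π c t v ∈ {v : V | ∀ i, 1 ≤ i → i ≤ t → π v ≠ c i} :=
        hc0S _ h01
      have hx' : π (Sassy9.extFun _ ψ₁ (Sassy9.src G π c t v)) = c 0 := by
        rw [Sassy9.extFun_mem _ ψ₁ _ hxS]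
        exact (h1.2 _).trans h01
      rw [Sassy9.lift_not_mem G π c t ψ₁ v hv,
        pathLift ψ₂ h2 _ hx' (Sassy9.idx π c t v) (by omega)]
      have he : Sassy9.extFun _ ψ₂ (Sassy9.extFun _ ψ₁ (Sassy9.src G π c t v)) =
          Sassy9.src G π c t v := by
        rw [Sassy9.extFun_mem _ ψ₁ _ hxS]
        have hm2 : ((ψ₁ ⟨_, hxS⟩).1 : V) ∈ {v : V | ∀ i, 1 ≤ i → i ≤ t → π v ≠ c i} :=
          (ψ₁ ⟨_, hxS⟩).2
        rw [Sassy9.extFun_mem _ ψ₂ _ hm2]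
        have e : (⟨(ψ₁ ⟨_, hxS⟩).1, hm2⟩ : {v : V | ∀ i, 1 ≤ i → i ≤ t → π v ≠ c i}) =
            ψ₁ ⟨_, hxS⟩ := rfl
        rw [e, hinv]
      rw [he, h02]
  -- the lift preserves adjacency (one direction)
  have liftAdj : ∀ ψ : Equiv.Perm {v : V | ∀ i, 1 ≤ i → i ≤ t → π v ≠ c i},
      Sassy.IsAut G' (fun v => π v.1) ψ → ∀ u v, G.Adj u v →
      G.Adj (Sassy9.lift G π c t ψ u) (Sassy9.lift G π c t ψ v) := by
    intro ψ hψ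
    have hmid : ∀ u v, G.Adj u v → ¬ (∀ i, 1 ≤ i → i ≤ t → π v ≠ c i) →
        G.Adj (Sassy9.lift G π c t ψ u) (Sassy9.lift G π c t ψ v) := by
      intro u v hadj hv
      obtain ⟨s1, s2, s3⟩ := idxSpec v hv
      obtain ⟨h01, h02⟩ := srcSpec v hv
      obtain ⟨k', hk'⟩ : ∃ k', Sassy9.idx π c t v = k' + 1 :=
        ⟨Sassy9.idx π c t v - 1, by omega⟩
      rw [hk'] at s2 s3 h02
      obtain ⟨a, b, ha, hb, hπa, hπb, hall⟩ := two_nbrs (k' + 1) (by omega) (by omega) v s3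
      have hstep1 := pathStep _ h01 k' (by omega)
      have hPa : Sassy9.pathFun G π c (Sassy9.src G π c t v) k' = a := by
        obtain ⟨z, -, huniq⟩ := bwdU (k' + 1) (by omega) (by omega) v s3
        have e1 := huniq a ⟨ha, hπa⟩
        have hadj1 : G.Adj (Sassy9.pathFun G π c (Sassy9.src G π c t v) (k' + 1))
            (Sassy9.pathFun G π c (Sassy9.src G π c t v) k') := hstep1.1.symm
        rw [h02] at hadj1
        have e2 := huniq _ ⟨hadj1, by simpa using pathColor _ h01 k' (by omega)⟩
        exact e2.trans e1.symm
      have hPb : Sassy9.pathFun G π c (Sassy9.src G π c t v) (k' + 2) = b := by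
        obtain ⟨z, -, huniq⟩ := fwdU (k' + 1) (by omega) (by omega) v s3
        have hstep2 := pathStep _ h01 (k' + 1) (by omega)
        have hadj2 : G.Adj (Sassy9.pathFun G π c (Sassy9.src G π c t v) (k' + 1))
            (Sassy9.pathFun G π c (Sassy9.src G π c t v) (k' + 2)) := hstep2.1
        rw [h02] at hadj2
        have e1 := huniq b ⟨hb, hπb⟩
        have e2 := huniq _ ⟨hadj2, hstep2.2⟩
        exact e2.trans e1.symm
      have hx' : π (Sassy9.extFun _ ψ (Sassy9.src G π c t v)) = c 0 := by
        rw [Sassy9.extFun_mem _ ψ _ (hc0S _ h01)]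
        exact (hψ.2 _).trans h01
      rcases hall u hadj.symm with rfl | rfl
      · rw [Sassy9.lift_not_mem G π c t ψ v hv, ← hPa,
          pathLift ψ hψ _ h01 k' (by omega), hk']
        exact (pathStep _ hx' k' (by omega)).1
      · rw [Sassy9.lift_not_mem G π c t ψ v hv, ← hPb,
          pathLift ψ hψ _ h01 (k' + 2) (by omega), hk']
        exact (pathStep _ hx' (k' + 1) (by omega)).1.symm
    intro u v hadj
    by_cases hv : ∀ i, 1 ≤ i → i ≤ t → π v ≠ c i
    · by_cases hu : ∀ i, 1 ≤ i → i ≤ t → π u ≠ c i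
      · rw [Sassy9.lift_mem G π c t ψ u hu, Sassy9.lift_mem G π c t ψ v hv,
          Sassy9.extFun_mem _ ψ u hu, Sassy9.extFun_mem _ ψ v hv]
        have hGuv : G'.Adj ⟨u, hu⟩ ⟨v, hv⟩ := (hG' _ _).mpr (Or.inl hadj)
        have h2 := (hψ.1 _ _).mpr hGuv
        rw [hG'] at h2
        rcases h2 with h | ⟨w, hw, hlast⟩ | ⟨w, hw, hlast⟩
        · exact h
        · exfalso
          have hu0 : π ((ψ ⟨u, hu⟩).1) = c 0 := by rw [← hw.1]; exact hw.2.1 ⟨0, by omega⟩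
          have hv1 : π ((ψ ⟨v, hv⟩).1) = c (t + 1) := by
            rw [← hlast]
            have := hw.2.1 (Fin.last (t + 1))
            simpa using this
          exact hXY u v ((hψ.2 ⟨u, hu⟩).symm.trans hu0)
            ((hψ.2 ⟨v, hv⟩).symm.trans hv1) hadj
        · exfalso
          have hv0 : π ((ψ ⟨v, hv⟩).1) = c 0 := by rw [← hw.1]; exact hw.2.1 ⟨0, by omega⟩
          have hu1 : π ((ψ ⟨u, hu⟩).1) = c (t + 1) := by
            rw [← hlast]
            have := hw.2.1 (Fin.last (t + 1))
            simpa using this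
          exact hXY v u ((hψ.2 ⟨v, hv⟩).symm.trans hv0)
            ((hψ.2 ⟨u, hu⟩).symm.trans hu1) hadj.symm
      · exact (hmid v u hadj.symm hu).symm
    · exact hmid u v hadj hv
  -- restriction of a G-automorphism preserves G'-adjacency
  have hmemIff : ∀ φ : Equiv.Perm V, φ ∈ Sassy.Aut G π ↔ Sassy.IsAut G π φ :=
    fun _ => Iff.rfl
  have hresMem : ∀ φ : Equiv.Perm V, (∀ v, π (φ v) = π v) →
      ∀ v : V, v ∈ {v : V | ∀ i, 1 ≤ i → i ≤ t → π v ≠ c i} ↔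
        φ v ∈ {v : V | ∀ i, 1 ≤ i → i ≤ t → π v ≠ c i} := by
    intro φ hφ v
    constructor
    · intro h i h1 h2 hc
      exact h i h1 h2 ((hφ v).symm.trans hc)
    · intro h i h1 h2 hc
      exact h i h1 h2 ((hφ v).trans hc)
  have hresAdj : ∀ φ : Equiv.Perm V, Sassy.IsAut G π φ →
      ∀ (u v : ↥{v : V | ∀ i, 1 ≤ i → i ≤ t → π v ≠ c i})
        (hu' : φ u.1 ∈ {v : V | ∀ i, 1 ≤ i → i ≤ t → π v ≠ c i})
        (hv' : φ v.1 ∈ {v : V | ∀ i, 1 ≤ i → i ≤ t → π v ≠ c i}),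
        G'.Adj u v → G'.Adj ⟨φ u.1, hu'⟩ ⟨φ v.1, hv'⟩ := by
    intro φ hφ u v hu' hv' h
    rw [hG'] at h ⊢
    rcases h with h | ⟨w, hw, hlast⟩ | ⟨w, hw, hlast⟩
    · exact Or.inl ((hφ.1 _ _).mpr h)
    · refine Or.inr (Or.inl ⟨fun i => φ (w i), ⟨congrArg φ hw.1, fun i => ?_, fun i hi => ?_⟩,
        congrArg φ hlast⟩)
      · rw [hφ.2]; exact hw.2.1 i
      · exact (hφ.1 _ _).mpr (hw.2.2 i hi)
    · refine Or.inr (Or.inr ⟨fun i => φ (w i), ⟨congrArg φ hw.1, fun i => ?_, fun i hi => ?_⟩,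
        congrArg φ hlast⟩)
      · rw [hφ.2]; exact hw.2.1 i
      · exact (hφ.1 _ _).mpr (hw.2.2 i hi)
  have hAutRes : ∀ (φ : Equiv.Perm V) (hφ : Sassy.IsAut G π φ),
      Sassy.IsAut G' (fun v => π v.1) (φ.subtypePerm (fun v => (hresMem φ hφ.2 v).symm)) := by
    intro φ hφ
    have hφi : Sassy.IsAut G π φ⁻¹ :=
      (hmemIff _).mp ((Sassy.Aut G π).inv_mem ((hmemIff _).mpr hφ))
    constructor
    · intro u v
      constructor
      · intro h
        have h2 := hresAdj φ⁻¹ hφi (φ.subtypePerm (fun v => (hresMem φ hφ.2 v).symm) u)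
          (φ.subtypePerm (fun v => (hresMem φ hφ.2 v).symm) v)
          ((hresMem φ⁻¹ hφi.2 _).mp (φ.subtypePerm (fun v => (hresMem φ hφ.2 v).symm) u).2)
          ((hresMem φ⁻¹ hφi.2 _).mp (φ.subtypePerm (fun v => (hresMem φ hφ.2 v).symm) v).2) h
        convert h2 using 2
        · rw [Equiv.Perm.subtypePerm_apply]; exact (Equiv.symm_apply_apply φ u.1).symm
        · rw [Equiv.Perm.subtypePerm_apply]; exact (Equiv.symm_apply_apply φ v.1).symm
      · intro h
        exact hresAdj φ hφ u v ((hresMem φ hφ.2 u.1).mp u.2)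
          ((hresMem φ hφ.2 v.1).mp v.2) h
    · intro v
      exact hφ.2 v.1
  -- the restriction homomorphism
  refine ⟨MonoidHom.mk' (fun φ =>
      ⟨(φ.1.subtypePerm (fun v => (hresMem φ.1 (((hmemIff φ.1).mp φ.2).2) v).symm)),
        hAutRes φ.1 ((hmemIff φ.1).mp φ.2)⟩) ?_, fun φ v => rfl, ?_⟩
  · intro a b
    exact Subtype.ext (Equiv.ext fun v => Subtype.ext rfl)
  · -- surjectivity
    intro ψ'
    have hψ : Sassy.IsAut G' (fun v => π v.1) ψ'.1 := ψ'.2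
    have hψi : Sassy.IsAut G' (fun v => π v.1) (ψ'.1)⁻¹ :=
      (Sassy.Aut G' (fun v => π v.1)).inv_mem ψ'.2
    have hli := liftInvFun ψ'.1 (ψ'.1)⁻¹ hψ hψi (fun s => Equiv.symm_apply_apply _ _)
    have hri := liftInvFun (ψ'.1)⁻¹ ψ'.1 hψi hψ (fun s => Equiv.apply_symm_apply _ _)
    let Φ : Equiv.Perm V :=
      ⟨Sassy9.lift G π c t ψ'.1, Sassy9.lift G π c t (ψ'.1)⁻¹, hli, hri⟩
    have hΦapp : ∀ v, Φ v = Sassy9.lift G π c t ψ'.1 v := fun _ => rfl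
    have hΦAut : Sassy.IsAut G π Φ := by
      constructor
      · intro u v
        constructor
        · intro h
          rw [hΦapp, hΦapp] at h
          have h2 := liftAdj (ψ'.1)⁻¹ hψi _ _ h
          rwa [hli u, hli v] at h2
        · intro h
          rw [hΦapp, hΦapp]
          exact liftAdj ψ'.1 hψ u v h
      · intro v
        rw [hΦapp]
        exact liftColor ψ'.1 hψ v
    refine ⟨⟨Φ, (hmemIff Φ).mpr hΦAut⟩, ?_⟩
    apply Subtype.ext
    apply Equiv.ext
    intro v
    apply Subtype.ext
    show Sassy9.lift G π c t ψ'.1 v.1 = (ψ'.1 v).1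
    rw [Sassy9.lift_mem G π c t ψ'.1 v.1 v.2, Sassy9.extFun_mem _ ψ'.1 v.1 v.2]
end

section
/- Let G=(V,E,π) be a colored graph, G'=(V',E',π') a reduced graph with V' ⊆ V, and 𝓡: V → V* a canonical representation mapping. Then the lifting map φ ↦ φ_𝓡 from Aut(G') to Aut(G) is injective and satisfies (φ∘ψ)_𝓡 = φ_𝓡 ∘ ψ_𝓡 on V' whenever both lifted maps agree on represented vertices; in particular, if 𝓡 represents every vertex of V (i.e., each v ∈ V ∖ V' occurs in exactly one representation string), the lifting is a group homomorphism section of the restriction map p: Aut(G) → Aut(G'). -/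
/-- For a canonical representation mapping R, the lifting map
φ ↦ φ_R from Aut(G') to Aut(G) is injective; and if R represents every deleted
vertex, the lifting is a multiplicative section of the restriction map. -/
theorem stmt12 {V C : Type*} [Fintype V] (G : SimpleGraph V) (π : V → C)
    (V' : Set V) (G' : SimpleGraph V') (π' : V' → C) (R : V → List V)
    (h1 : ∀ v ∈ V', ∃ S : List V, R v = v :: S)
    (h2 : ∀ v ∉ V', R v = [])
    (h3 : ∀ v, v ∉ V' → ∀ (v₁ v₂ : ↥V') (i j : ℕ)
      (hi : i < (R v₁.1).length) (hj : j < (R v₂.1).length),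
      (R v₁.1).get ⟨i, hi⟩ = v → (R v₂.1).get ⟨j, hj⟩ = v → v₁ = v₂ ∧ i = j)
    (lift : ↥(Sassy.Aut G' π') → ↥(Sassy.Aut G π))
    (hlen : ∀ (φ : ↥(Sassy.Aut G' π')) (v' : ↥V'),
      (R (φ.1 v').1).length = (R v'.1).length)
    (hlift_rep : ∀ (φ : ↥(Sassy.Aut G' π')) (v' : ↥V') (i : ℕ), i < (R v'.1).length →
      (lift φ).1 ((R v'.1).getD i v'.1) = (R (φ.1 v').1).getD i v'.1)
    (hlift_fix : ∀ (φ : ↥(Sassy.Aut G' π')) (v : V), (∀ v' : ↥V', v ∉ R v'.1) →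
      (lift φ).1 v = v) :
    Function.Injective lift ∧
    ((∀ v ∉ V', ∃ v' : ↥V', v ∈ R v'.1) →
      (∀ φ ψ, lift (φ * ψ) = lift φ * lift ψ) ∧
        ∀ (φ : ↥(Sassy.Aut G' π')) (v' : ↥V'), (lift φ).1 v'.1 = (φ.1 v').1) := by
  have key : ∀ (φ : ↥(Sassy.Aut G' π')) (v' : ↥V'), (lift φ).1 v'.1 = (φ.1 v').1 := by
    intro φ v'
    obtain ⟨S, hS⟩ := h1 v'.1 v'.2
    obtain ⟨S', hS'⟩ := h1 (φ.1 v').1 (φ.1 v').2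
    have hlen0 : 0 < (R v'.1).length := by rw [hS]; simp
    have h := hlift_rep φ v' 0 hlen0
    rw [hS, hS'] at h
    simpa using h
  refine ⟨?_, fun hcover => ⟨?_, key⟩⟩
  · intro φ ψ h
    apply Subtype.ext
    apply Equiv.ext
    intro v'
    apply Subtype.ext
    have := key φ v'
    rw [h] at this
    rw [← this, key ψ v']
  · intro φ ψ
    apply Subtype.ext
    apply Equiv.ext
    intro v
    by_cases hv : v ∈ V'
    · have e1 := key (φ * ψ) ⟨v, hv⟩
      have e2 := key ψ ⟨v, hv⟩
      have e3 := key φ (ψ.1 ⟨v, hv⟩)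
      simp only [Equiv.Perm.mul_apply, Subgroup.coe_mul] at *
      rw [e1, e2, e3]
    · obtain ⟨v', hv'⟩ := hcover v hv
      obtain ⟨⟨i, hi⟩, hget⟩ := List.mem_iff_get.mp hv'
      have hi2 : i < (R (ψ.1 v').1).length := by rw [hlen]; exact hi
      have hi3 : i < (R ((φ * ψ).1 v').1).length := by rw [hlen]; exact hi
      have e1 := hlift_rep (φ * ψ) v' i hi
      have e2 := hlift_rep ψ v' i hi
      have e3 := hlift_rep φ (ψ.1 v') i hi2
      rw [List.getD_eq_getElem _ _ hi] at e1 e2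
      rw [List.getD_eq_getElem _ _ hi2] at e2 e3
      rw [List.getD_eq_getElem _ _ hi3] at e1
      rw [List.getD_eq_getElem _ _ (by rw [hlen]; exact hi2)] at e3
      simp only [List.get_eq_getElem] at hget
      rw [hget] at e1 e2
      simp only [Equiv.Perm.mul_apply, Subgroup.coe_mul] at *
      rw [e1, e2, e3]
end
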